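/- Let N ≥ 1 and let F = ℚ(t, x_1, …, x_N) be the field of rational functions. Define x̂_j := x_j for 1 ≤ j ≤ N and x̂_j := x_{2N+1−j}^{−1} for N+1 ≤ j ≤ 2N, and for i ∈ {1,…,N} set ι(i,+1) := i and ι(i,−1) := 2N+1−i. Then for every i ∈ {1,…,N} and every ε ∈ {+1, −1}, the following identity holds in F: ∏_{j=1,…,2N, j ≠ ι(i,ε)} (t x̂_{ι(i,ε)} − x̂_j)/(x̂_{ι(i,ε)} − x̂_j) = [(1 − t x_i^{2ε})/(1 − x_i^{2ε})] · ∏_{j≠i, 1 ≤ j ≤ N} [(1 − t x_i^{ε} x_j)/(1 − x_i^{ε} x_j)] · [(t x_i^{ε} − x_j)/(x_i^{ε} − x_j)]. (This expresses that the folding specialization x_{2N+1−i} = x_i^{−1}, Γ_{2N+1−i} = Γ_i^{−1} maps the first Macdonald operator of type A_{2N−1}^{(1)} to the first Macdonald operator of type A_{2N−1}^{(2)}.) -/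

import Mathlib

open scoped BigOperators

noncomputable section

/-- The field `ℚ(t, x_1, …, x_N)` of rational functions in `N + 1` indeterminates. -/
abbrev FoldField (N : ℕ) : Type :=
  FractionRing (MvPolynomial (Fin (N + 1)) ℚ)

/-- The indeterminate `t` (index `0`). -/
noncomputable def tVar (N : ℕ) : FoldField N :=
  algebraMap (MvPolynomial (Fin (N + 1)) ℚ) (FoldField N) (MvPolynomial.X 0)

open Fin.NatCast in
/-- The indeterminates `x_1, …, x_N` (indices `1, …, N`). -/
noncomputable def xVar (N : ℕ) (j : ℕ) : FoldField N :=
  algebraMap (MvPolynomial (Fin (N + 1)) ℚ) (FoldField N) (MvPolynomial.X (j : Fin (N + 1)))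

/-- The folded variables `x̂_j = x_j` for `1 ≤ j ≤ N` and `x̂_j = x_{2N+1-j}⁻¹` for
`N+1 ≤ j ≤ 2N`. -/
noncomputable def xHat (N : ℕ) (j : ℕ) : FoldField N :=
  if j ≤ N then xVar N j else (xVar N (2 * N + 1 - j))⁻¹

/-- The index `ι(i, ε)`: `ι(i, +1) = i` and `ι(i, -1) = 2N+1-i`. -/
def iota (N : ℕ) (i : ℕ) (ε : ℤ) : ℕ :=
  if ε = 1 then i else 2 * N + 1 - i

/- ### Auxiliary lemmas -/

open Fin.NatCast in
lemma xVar_ne_zero (N a : ℕ) : xVar N a ≠ 0 := by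
  intro h
  have h' : (MvPolynomial.X (a : Fin (N + 1)) : MvPolynomial (Fin (N + 1)) ℚ) = 0 := by
    apply IsFractionRing.injective (MvPolynomial (Fin (N + 1)) ℚ) (FoldField N)
    rw [map_zero]; exact h
  exact MvPolynomial.X_ne_zero _ h'

open Fin.NatCast in
lemma xVar_mul_ne_one (N a b : ℕ) : xVar N a * xVar N b ≠ 1 := by
  intro h
  have h' : (MvPolynomial.X (a : Fin (N + 1)) * MvPolynomial.X (b : Fin (N + 1)) :
      MvPolynomial (Fin (N + 1)) ℚ) = 1 := by
    apply IsFractionRing.injective (MvPolynomial (Fin (N + 1)) ℚ) (FoldField N)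
    rw [map_mul, map_one]; exact h
  have := congrArg (MvPolynomial.eval (fun _ => (0 : ℚ))) h'
  simp at this

open Fin.NatCast in
lemma xVar_ne (N a b : ℕ) (ha : a ≤ N) (hb : b ≤ N) (hab : a ≠ b) : xVar N a ≠ xVar N b := by
  intro h
  have h' : (MvPolynomial.X (a : Fin (N + 1)) : MvPolynomial (Fin (N + 1)) ℚ) =
      MvPolynomial.X (b : Fin (N + 1)) :=
    IsFractionRing.injective (MvPolynomial (Fin (N + 1)) ℚ) (FoldField N) h
  have hab' : (a : Fin (N + 1)) ≠ (b : Fin (N + 1)) := by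
    intro hc
    apply hab
    have := congrArg Fin.val hc
    rwa [Fin.val_cast_of_lt (by omega), Fin.val_cast_of_lt (by omega)] at this
  have h2 := congrArg (MvPolynomial.eval (fun c => if c = (a : Fin (N + 1)) then (1 : ℚ) else 0)) h'
  rw [MvPolynomial.eval_X, MvPolynomial.eval_X, if_pos rfl, if_neg hab'.symm] at h2
  exact one_ne_zero h2

lemma aux1 {F : Type*} [Field F] (t a b : F) (hb : b ≠ 0) (h1 : a * b ≠ 1) :
    (t * a - b⁻¹) / (a - b⁻¹) = (1 - t * a * b) / (1 - a * b) := by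
  have h2 : (1 : F) - a * b ≠ 0 := sub_ne_zero.mpr fun h => h1 h.symm
  have h3 : a - b⁻¹ ≠ 0 := by
    rw [sub_ne_zero]
    intro h
    exact h1 (by rw [h, inv_mul_cancel₀ hb])
  rw [div_eq_div_iff h3 h2]
  field_simp
  ring

lemma aux2 {F : Type*} [Field F] (t a : F) (ha : a ≠ 0) (h1 : a * a ≠ 1) :
    (t * a⁻¹ - a) / (a⁻¹ - a) = (1 - t * (a * a)⁻¹) / (1 - (a * a)⁻¹) := by
  have hne : (a : F)⁻¹ ≠ a := by
    intro h
    apply h1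
    nth_rewrite 2 [← h]
    rw [mul_inv_cancel₀ ha]
  have h3 : a⁻¹ - a ≠ 0 := sub_ne_zero.mpr hne
  have h2 : (1 : F) - (a * a)⁻¹ ≠ 0 := by
    rw [sub_ne_zero]
    intro h
    apply h1
    have : (a * a)⁻¹ = 1 := h.symm
    rw [← inv_inv (a * a), this, inv_one]
  rw [div_eq_div_iff h3 h2]
  field_simp
  ring

lemma aux3 {F : Type*} [Field F] (t a b : F) (ha : a ≠ 0) (hb : b ≠ 0) (hab : a ≠ b) :
    (t * a⁻¹ - b⁻¹) / (a⁻¹ - b⁻¹) = (1 - t * a⁻¹ * b) / (1 - a⁻¹ * b) := by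
  have h2 : (1 : F) - a⁻¹ * b ≠ 0 := by
    rw [sub_ne_zero]
    intro h
    exact hab ((inv_mul_eq_one₀ ha).mp h.symm)
  have h3 : a⁻¹ - b⁻¹ ≠ 0 := sub_ne_zero.mpr fun h => hab (inv_injective h)
  rw [div_eq_div_iff h3 h2]
  field_simp
  ring

lemma xHat_low (N j : ℕ) (h : j ≤ N) : xHat N j = xVar N j := by
  rw [xHat, if_pos h]

lemma xHat_high (N j : ℕ) (h : ¬ j ≤ N) : xHat N j = (xVar N (2 * N + 1 - j))⁻¹ := by
  rw [xHat, if_neg h]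

/-- The folding specialization `x_{2N+1-i} = x_i⁻¹`, `Γ_{2N+1-i} = Γ_i⁻¹` maps the first
Macdonald operator of type `A_{2N-1}^{(1)}` to the first Macdonald operator of type
`A_{2N-1}^{(2)}`: for `i ∈ {1,…,N}` and `ε ∈ {+1, -1}`,
`∏_{j ∈ {1,…,2N} \ {ι(i,ε)}} (t x̂_{ι(i,ε)} - x̂_j)/(x̂_{ι(i,ε)} - x̂_j)
  = [(1 - t x_i^{2ε})/(1 - x_i^{2ε})]
    ∏_{j≠i, 1≤j≤N} [(1 - t x_i^ε x_j)/(1 - x_i^ε x_j)]·[(t x_i^ε - x_j)/(x_i^ε - x_j)]`. -/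
theorem folding_identity (N : ℕ) (hN : 1 ≤ N) (i : ℕ) (hi : i ∈ Finset.Icc 1 N)
    (ε : ℤ) (hε : ε = 1 ∨ ε = -1) :
    ∏ j ∈ (Finset.Icc 1 (2 * N)).erase (iota N i ε),
        (tVar N * xHat N (iota N i ε) - xHat N j) / (xHat N (iota N i ε) - xHat N j) =
      ((1 - tVar N * xVar N i ^ (2 * ε)) / (1 - xVar N i ^ (2 * ε))) *
        ∏ j ∈ (Finset.Icc 1 N).erase i,
          ((1 - tVar N * xVar N i ^ ε * xVar N j) / (1 - xVar N i ^ ε * xVar N j)) *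
            ((tVar N * xVar N i ^ ε - xVar N j) / (xVar N i ^ ε - xVar N j)) := by
  obtain ⟨hi1, hi2⟩ := Finset.mem_Icc.mp hi
  set t := tVar N with ht
  rcases hε with rfl | rfl
  · -- ε = 1
    have hiota : iota N i 1 = i := by simp [iota]
    rw [hiota]
    have hpow1 : xVar N i ^ (1 : ℤ) = xVar N i := zpow_one _
    have hpow2 : xVar N i ^ (2 * (1 : ℤ)) = xVar N i * xVar N i := by
      norm_num [zpow_two, sq]
    rw [hpow1, hpow2]
    have hxi : xHat N i = xVar N i := xHat_low N i hi2
    have hset : (Finset.Icc 1 (2 * N)).erase i =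
        ((Finset.Icc 1 N).erase i) ∪ Finset.Icc (N + 1) (2 * N) := by
      ext j
      simp only [Finset.mem_erase, Finset.mem_Icc, Finset.mem_union]
      omega
    have hdisj : Disjoint ((Finset.Icc 1 N).erase i) (Finset.Icc (N + 1) (2 * N)) := by
      rw [Finset.disjoint_left]
      intro j hj hj2
      simp only [Finset.mem_erase, Finset.mem_Icc] at hj hj2
      omega
    rw [hset, Finset.prod_union hdisj]
    have h1 : ∏ j ∈ (Finset.Icc 1 N).erase i,
        (t * xHat N i - xHat N j) / (xHat N i - xHat N j) =
        ∏ j ∈ (Finset.Icc 1 N).erase i,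
        (t * xVar N i - xVar N j) / (xVar N i - xVar N j) := by
      apply Finset.prod_congr rfl
      intro j hj
      obtain ⟨hji, hj1, hj2⟩ := by
        simpa only [Finset.mem_erase, Finset.mem_Icc] using hj
      rw [hxi, xHat_low N j hj2]
    have h2 : ∏ j ∈ Finset.Icc (N + 1) (2 * N),
        (t * xHat N i - xHat N j) / (xHat N i - xHat N j) =
        ∏ k ∈ Finset.Icc 1 N,
        (1 - t * xVar N i * xVar N k) / (1 - xVar N i * xVar N k) := by
      apply Finset.prod_nbij' (fun j => 2 * N + 1 - j) (fun k => 2 * N + 1 - k)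
      · intro a ha
        simp only [Finset.mem_Icc] at ha ⊢
        omega
      · intro a ha
        simp only [Finset.mem_Icc] at ha ⊢
        omega
      · intro a ha
        simp only [Finset.mem_Icc] at ha
        omega
      · intro a ha
        simp only [Finset.mem_Icc] at ha
        omega
      · intro a ha
        simp only [Finset.mem_Icc] at ha
        rw [hxi, xHat_high N a (by omega)]
        exact aux1 t (xVar N i) (xVar N (2 * N + 1 - a)) (xVar_ne_zero N _)
          (xVar_mul_ne_one N _ _)
    rw [h1, h2, ← Finset.mul_prod_erase (Finset.Icc 1 N)
      (fun k => (1 - t * xVar N i * xVar N k) / (1 - xVar N i * xVar N k)) hi]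
    rw [Finset.prod_mul_distrib]
    ring
  · -- ε = -1
    have hiota : iota N i (-1) = 2 * N + 1 - i := by norm_num [iota]
    rw [hiota]
    have hpow1 : xVar N i ^ (-1 : ℤ) = (xVar N i)⁻¹ := zpow_neg_one _
    have hpow2 : xVar N i ^ (2 * (-1 : ℤ)) = (xVar N i * xVar N i)⁻¹ := by
      rw [show (2 * (-1 : ℤ)) = -2 by norm_num, zpow_neg, zpow_two]
    rw [hpow1, hpow2]
    have hxι : xHat N (2 * N + 1 - i) = (xVar N i)⁻¹ := by
      rw [xHat_high N _ (by omega), show 2 * N + 1 - (2 * N + 1 - i) = i by omega]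
    have hset : (Finset.Icc 1 (2 * N)).erase (2 * N + 1 - i) =
        Finset.Icc 1 N ∪ (Finset.Icc (N + 1) (2 * N)).erase (2 * N + 1 - i) := by
      ext j
      simp only [Finset.mem_erase, Finset.mem_Icc, Finset.mem_union]
      omega
    have hdisj : Disjoint (Finset.Icc 1 N)
        ((Finset.Icc (N + 1) (2 * N)).erase (2 * N + 1 - i)) := by
      rw [Finset.disjoint_left]
      intro j hj hj2
      simp only [Finset.mem_erase, Finset.mem_Icc] at hj hj2
      omega
    rw [hset, Finset.prod_union hdisj]
    have h1 : ∏ j ∈ Finset.Icc 1 N,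
        (t * xHat N (2 * N + 1 - i) - xHat N j) / (xHat N (2 * N + 1 - i) - xHat N j) =
        ∏ j ∈ Finset.Icc 1 N,
        (t * (xVar N i)⁻¹ - xVar N j) / ((xVar N i)⁻¹ - xVar N j) := by
      apply Finset.prod_congr rfl
      intro j hj
      obtain ⟨hj1, hj2⟩ := Finset.mem_Icc.mp hj
      rw [hxι, xHat_low N j hj2]
    have h2 : ∏ j ∈ (Finset.Icc (N + 1) (2 * N)).erase (2 * N + 1 - i),
        (t * xHat N (2 * N + 1 - i) - xHat N j) / (xHat N (2 * N + 1 - i) - xHat N j) =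
        ∏ k ∈ (Finset.Icc 1 N).erase i,
        (1 - t * (xVar N i)⁻¹ * xVar N k) / (1 - (xVar N i)⁻¹ * xVar N k) := by
      apply Finset.prod_nbij' (fun j => 2 * N + 1 - j) (fun k => 2 * N + 1 - k)
      · intro a ha
        simp only [Finset.mem_erase, Finset.mem_Icc] at ha ⊢
        omega
      · intro a ha
        simp only [Finset.mem_erase, Finset.mem_Icc] at ha ⊢
        omega
      · intro a ha
        simp only [Finset.mem_erase, Finset.mem_Icc] at ha
        omega
      · intro a ha
        simp only [Finset.mem_erase, Finset.mem_Icc] at ha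
        omega
      · intro a ha
        simp only [Finset.mem_erase, Finset.mem_Icc] at ha
        rw [hxι, xHat_high N a (by omega)]
        exact aux3 t (xVar N i) (xVar N (2 * N + 1 - a)) (xVar_ne_zero N _)
          (xVar_ne_zero N _) (xVar_ne N i _ hi2 (by omega) (by omega))
    rw [h1, h2, ← Finset.mul_prod_erase (Finset.Icc 1 N)
      (fun j => (t * (xVar N i)⁻¹ - xVar N j) / ((xVar N i)⁻¹ - xVar N j)) hi]
    have hself : (t * (xVar N i)⁻¹ - xVar N i) / ((xVar N i)⁻¹ - xVar N i) =
        (1 - t * (xVar N i * xVar N i)⁻¹) / (1 - (xVar N i * xVar N i)⁻¹) :=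
      aux2 t (xVar N i) (xVar_ne_zero N i) (xVar_mul_ne_one N i i)
    rw [hself, Finset.prod_mul_distrib]
    ring
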